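/- arXiv:1712.06028 — 2 statements merged into one kernel-verified Lean document; each statement's English description precedes it below -/
import Mathlib

section
/- The function jinc(x) = J₁(x)/x attains its supremum over (0,∞) in the limit x → 0⁺, where its value is 1/2; that is, J₁(x)/x ≤ 1/2 for all x > 0 and lim_{x→0⁺} J₁(x)/x = 1/2. -/
open Real Filter

/-- Bessel function of the first kind of order `ν`. -/
noncomputable def besselJ (ν x : ℝ) : ℝ :=
  ∑' m : ℕ, ((-1 : ℝ) ^ m / (m.factorial * Real.Gamma (m + ν + 1))) * (x / 2) ^ ((2 * m : ℝ) + ν)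

noncomputable def jincS (a : ℕ → ℝ) (t : ℝ) : ℝ := ∑' m : ℕ, a m * t ^ m

lemma jinc_summable {a : ℕ → ℝ} (ha : ∀ m, |a m| ≤ 1 / m.factorial) (t : ℝ) :
    Summable (fun m => a m * t ^ m) := by
  apply Summable.of_norm
  refine Summable.of_nonneg_of_le (fun _ => norm_nonneg _) (fun m => ?_)
    (Real.summable_pow_div_factorial |t|)
  have : ‖a m * t ^ m‖ = |a m| * |t| ^ m := by
    rw [norm_mul, norm_pow]; rfl
  rw [this]
  have h1 : (0:ℝ) ≤ |t| ^ m := by positivity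
  calc |a m| * |t| ^ m ≤ (1 / m.factorial) * |t| ^ m := by
        exact mul_le_mul_of_nonneg_right (ha m) h1
    _ = |t| ^ m / m.factorial := by ring

lemma jinc_shift_bound {a : ℕ → ℝ} (ha : ∀ m, |a m| ≤ 1 / m.factorial) (m : ℕ) :
    |((m:ℝ)+1) * a (m+1)| ≤ 1 / m.factorial := by
  have h := ha (m+1)
  have hfac : ((m+1).factorial : ℝ) = ((m:ℝ)+1) * m.factorial := by
    push_cast [Nat.factorial_succ]; ring
  rw [abs_mul, abs_of_nonneg (by positivity : (0:ℝ) ≤ (m:ℝ)+1)]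
  calc ((m:ℝ)+1) * |a (m+1)| ≤ ((m:ℝ)+1) * (1 / (m+1).factorial) := by
        exact mul_le_mul_of_nonneg_left h (by positivity)
    _ = 1 / m.factorial := by
        rw [hfac]; field_simp

lemma jinc_hasDerivAt {a : ℕ → ℝ} (ha : ∀ m, |a m| ≤ 1 / m.factorial) (t : ℝ) :
    HasDerivAt (jincS a) (jincS (fun m => ((m:ℝ)+1) * a (m+1)) t) t := by
  set R : ℝ := |t| + 1 with hR
  have hR1 : (1:ℝ) ≤ R := by rw [hR]; linarith [abs_nonneg t]
  have hR0 : (0:ℝ) < R := by positivity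
  -- summable bound
  have hu : Summable (fun n : ℕ => (2*R)^n / n.factorial) := Real.summable_pow_div_factorial _
  have hu' : Summable (fun n : ℕ => (n:ℝ) * R ^ n / n.factorial) := by
    refine Summable.of_nonneg_of_le (fun n => by positivity) (fun n => ?_) hu
    have h2 : (n:ℝ) ≤ 2 ^ n := by
      exact_mod_cast (Nat.lt_two_pow_self (n := n)).le
    have : (n:ℝ) * R ^ n ≤ 2 ^ n * R ^ n := by
      apply mul_le_mul_of_nonneg_right h2 (by positivity)
    calc (n:ℝ) * R ^ n / n.factorial ≤ 2 ^ n * R ^ n / n.factorial := by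
          apply div_le_div_of_nonneg_right this (by positivity)
      _ = (2*R)^n / n.factorial := by rw [mul_pow]
  have key : HasDerivAt (fun z => ∑' n, a n * z ^ n)
      (∑' n, a n * ((n:ℝ) * t ^ (n-1))) t := by
    apply hasDerivAt_tsum_of_isPreconnected hu' (Metric.isOpen_ball)
      (convex_ball (0:ℝ) R).isPreconnected
      (g' := fun n y => a n * ((n:ℝ) * y ^ (n-1)))
      (fun n y _ => (hasDerivAt_pow n y).const_mul (a n))
      (fun n y hy => ?_) (y₀ := 0) (by simp [Metric.mem_ball, hR0]) (jinc_summable ha 0)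
      (by simp [Metric.mem_ball, Real.dist_eq, hR])
    · -- norm bound
      match n with
      | 0 => simp
      | (k+1) =>
        have hy' : |y| ≤ R := le_of_lt (by simpa [Real.dist_eq] using hy)
        have h1 : ‖a (k+1) * (((k+1:ℕ):ℝ) * y ^ (k+1-1))‖
            = |a (k+1)| * (((k:ℝ)+1) * |y| ^ k) := by
          rw [norm_mul, norm_mul, norm_pow]
          push_cast
          simp [abs_of_nonneg (by positivity : (0:ℝ) ≤ (k:ℝ)+1)]
        rw [h1]
        have h2 : |y| ^ k ≤ R ^ (k+1) := by
          calc |y| ^ k ≤ R ^ k := pow_le_pow_left₀ (abs_nonneg y) hy' k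
            _ ≤ R ^ (k+1) := pow_le_pow_right₀ hR1 (Nat.le_succ k)
        have h3 : |a (k+1)| * (((k:ℝ)+1) * |y| ^ k)
            ≤ (1/(k+1).factorial) * (((k:ℝ)+1) * R ^ (k+1)) := by
          apply mul_le_mul (ha (k+1)) (by
            apply mul_le_mul_of_nonneg_left h2 (by positivity)) (by positivity) (by positivity)
        refine h3.trans (le_of_eq ?_)
        push_cast
        ring
  -- now rewrite the derivative sum
  have hsum2 : Summable (fun k : ℕ => (((k:ℝ)+1) * a (k+1)) * t ^ k) :=
    jinc_summable (jinc_shift_bound ha) t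
  have hsum1 : Summable (fun n : ℕ => a n * ((n:ℝ) * t ^ (n-1))) := by
    rw [← summable_nat_add_iff 1]
    refine hsum2.congr (fun k => ?_)
    push_cast
    ring
  have heq : (∑' n : ℕ, a n * ((n:ℝ) * t ^ (n-1)))
      = jincS (fun m => ((m:ℝ)+1) * a (m+1)) t := by
    rw [Summable.tsum_eq_zero_add hsum1]
    simp only [jincS]
    rw [show (a 0 * (((0:ℕ):ℝ) * t ^ (0-1))) = 0 by simp, zero_add]
    refine tsum_congr (fun k => ?_)
    push_cast
    ring
  rw [heq] at key
  exact key

noncomputable def jincC (m : ℕ) : ℝ := (-1)^m / (m.factorial * (m+1).factorial)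
noncomputable def jincD (m : ℕ) : ℝ := ((m:ℝ)+1) * jincC (m+1)
noncomputable def jincE (m : ℕ) : ℝ := ((m:ℝ)+1) * jincD (m+1)

lemma jincC_bound : ∀ m, |jincC m| ≤ 1 / m.factorial := by
  intro m
  rw [jincC, abs_div, abs_pow, abs_neg, abs_one, one_pow]
  rw [abs_of_nonneg (by positivity : (0:ℝ) ≤ (m.factorial : ℝ) * (m+1).factorial)]
  rw [div_le_div_iff₀ (by positivity) (by positivity)]
  have h1 : (1:ℝ) ≤ (m+1).factorial := by exact_mod_cast Nat.one_le_iff_ne_zero.2 (m+1).factorial_ne_zero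
  have hmpos : (0:ℝ) < m.factorial := by exact_mod_cast m.factorial_pos
  nlinarith [hmpos]

lemma jincD_bound : ∀ m, |jincD m| ≤ 1 / m.factorial := jinc_shift_bound jincC_bound
lemma jincE_bound : ∀ m, |jincE m| ≤ 1 / m.factorial := jinc_shift_bound jincD_bound

lemma jincC_rec (m : ℕ) : ((m:ℝ)+1) * ((m:ℝ)+2) * jincC (m+1) = - jincC m := by
  have h1 : ((m+1).factorial : ℝ) = ((m:ℝ)+1) * m.factorial := by
    push_cast [Nat.factorial_succ]; ring
  have h2 : ((m+2).factorial : ℝ) = ((m:ℝ)+2) * (m+1).factorial := by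
    push_cast [Nat.factorial_succ]; ring
  have hm : (0:ℝ) < m.factorial := by exact_mod_cast m.factorial_pos
  have hm1 : (0:ℝ) < (m+1).factorial := by exact_mod_cast (m+1).factorial_pos
  simp only [jincC]
  rw [show m+1+1 = m+2 from rfl, h2, h1]
  field_simp
  ring

-- the ODE: t * h + 2*g + f = 0
lemma jinc_ode (t : ℝ) :
    t * jincS jincE t + 2 * jincS jincD t + jincS jincC t = 0 := by
  have hsC := jinc_summable jincC_bound t
  have hsD := jinc_summable jincD_bound t
  have hsE := jinc_summable jincE_bound t
  have h1 : t * jincS jincE t = ∑' m : ℕ, jincE m * t ^ (m+1) := by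
    rw [jincS, ← tsum_mul_left]
    exact tsum_congr fun m => by ring
  have h2 : 2 * jincS jincD t + jincS jincC t
      = ∑' m : ℕ, (2 * jincD m + jincC m) * t ^ m := by
    rw [jincS, jincS, ← tsum_mul_left, ← Summable.tsum_add (hsD.mul_left 2) hsC]
    exact tsum_congr fun m => by ring
  have hs2 : Summable (fun m : ℕ => (2 * jincD m + jincC m) * t ^ m) := by
    refine Summable.congr (((hsD.mul_left 2).add hsC)) (fun m => by ring)
  have h3 : ∑' m : ℕ, (2 * jincD m + jincC m) * t ^ m
      = ∑' m : ℕ, (2 * jincD (m+1) + jincC (m+1)) * t ^ (m+1) := by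
    rw [Summable.tsum_eq_zero_add hs2]
    have h0 : (2 * jincD 0 + jincC 0) * t ^ 0 = 0 := by
      simp [jincD, jincC]
      norm_num [Nat.factorial]
    rw [h0, zero_add]
  have hkey : ∀ m : ℕ, jincE m + (2 * jincD (m+1) + jincC (m+1)) = 0 := by
    intro m
    have r1 := jincC_rec (m+1)
    have : jincE m = ((m:ℝ)+1) * ((m:ℝ)+2) * jincC (m+2) := by
      simp only [jincE, jincD]
      push_cast
      ring
    simp only [jincD, this]
    push_cast at r1 ⊢
    nlinarith [r1]
  rw [h1, add_assoc, h2, h3, ← Summable.tsum_add ?_ ?_]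
  · rw [show (0:ℝ) = ∑' (_ : ℕ), (0:ℝ) by simp]
    refine tsum_congr fun m => ?_
    have := hkey m
    linear_combination (t ^ (m+1)) * this
  · exact Summable.congr (hsE.mul_right t) (fun m => by ring)
  · rw [← summable_nat_add_iff 1] at hs2
    exact hs2

lemma jincS_C_zero : jincS jincC 0 = 1 := by
  rw [jincS, tsum_eq_single 0 (fun m hm => by
    rw [zero_pow hm, mul_zero])]
  simp [jincC, Nat.factorial]

lemma jinc_energy_hasDerivAt (t : ℝ) :
    HasDerivAt (fun s => (jincS jincC s)^2 + s * (jincS jincD s)^2)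
      (-3 * (jincS jincD t)^2) t := by
  have hf := jinc_hasDerivAt jincC_bound t
  have hg := jinc_hasDerivAt jincD_bound t
  have hfD : HasDerivAt (jincS jincC) (jincS jincD t) t := by
    convert hf using 2
    rfl
  have hgE : HasDerivAt (jincS jincD) (jincS jincE t) t := by
    convert hg using 2
    rfl
  have h1 : HasDerivAt (fun s => (jincS jincC s)^2 + s * (jincS jincD s)^2)
      (2 * jincS jincC t * jincS jincD t +
        ((jincS jincD t)^2 + t * (2 * jincS jincD t * jincS jincE t))) t := by
    have hsq1 : HasDerivAt (fun s => (jincS jincC s)^2) (2 * jincS jincC t * jincS jincD t) t := by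
      simpa [mul_comm, mul_assoc, mul_left_comm] using hfD.fun_pow 2
    have hsq2 : HasDerivAt (fun s => (jincS jincD s)^2) (2 * jincS jincD t * jincS jincE t) t := by
      simpa [mul_comm, mul_assoc, mul_left_comm] using hgE.fun_pow 2
    have h := hsq1.fun_add ((hasDerivAt_id t).fun_mul hsq2)
    simpa using h
  convert h1 using 1
  have ode := jinc_ode t
  linear_combination (-2 * jincS jincD t) * ode

lemma jincS_C_le_one {t : ℝ} (ht : 0 ≤ t) : jincS jincC t ≤ 1 := by
  set E : ℝ → ℝ := fun s => (jincS jincC s)^2 + s * (jincS jincD s)^2 with hE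
  have hanti : AntitoneOn E (Set.Ici 0) := by
    apply antitoneOn_of_deriv_nonpos (convex_Ici 0)
    · exact fun x _ => ((jinc_energy_hasDerivAt x).continuousAt).continuousWithinAt
    · exact fun x _ => ((jinc_energy_hasDerivAt x).differentiableAt).differentiableWithinAt
    · intro x _
      rw [hE, (jinc_energy_hasDerivAt x).deriv]
      nlinarith [sq_nonneg (jincS jincD x)]
  have h0 : E t ≤ E 0 := hanti (Set.self_mem_Ici) ht ht
  have hE0 : E 0 = 1 := by
    simp [hE, jincS_C_zero]
  have : (jincS jincC t)^2 ≤ 1 := by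
    have : (jincS jincC t)^2 ≤ E t := by
      simp only [hE]
      nlinarith [sq_nonneg (jincS jincD t)]
    linarith [h0, hE0 ▸ h0]
  nlinarith [this]

lemma besselJ_eq (x : ℝ) :
    besselJ 1 x = (x / 2) * jincS jincC (x^2/4) := by
  rw [besselJ, jincS, ← tsum_mul_left]
  refine tsum_congr fun m => ?_
  have hgamma : Real.Gamma ((m:ℝ) + 1 + 1) = (m+1).factorial := by
    rw [show ((m:ℝ) + 1 + 1) = ((m+1:ℕ):ℝ) + 1 by push_cast; ring,
      Real.Gamma_nat_eq_factorial]
  have hpow : (x / 2) ^ ((2 * (m:ℝ)) + 1) = (x / 2) ^ (2*m+1 : ℕ) := by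
    rw [show ((2 * (m:ℝ)) + 1) = ((2*m+1 : ℕ) : ℝ) by push_cast; ring,
      Real.rpow_natCast]
  rw [hgamma, hpow, jincC]
  have h2 : (x/2) ^ (2*m+1 : ℕ) = (x/2) * (x^2/4)^m := by
    rw [pow_succ', pow_mul]
    congr 1
    ring_nf
  rw [h2]
  ring

/-- `jinc(x) = J₁(x)/x` is bounded by `1/2` on `(0,∞)` and tends to `1/2` as `x → 0⁺`. -/
theorem jinc_le_half_and_limit :
    (∀ x > (0 : ℝ), besselJ 1 x / x ≤ 1 / 2) ∧
    Tendsto (fun x => besselJ 1 x / x) (nhdsWithin 0 (Set.Ioi 0)) (nhds (1 / 2)) := by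
  have hdiv : ∀ x : ℝ, x ≠ 0 → besselJ 1 x / x = jincS jincC (x^2/4) / 2 := by
    intro x hx
    rw [besselJ_eq x]
    field_simp
  constructor
  · intro x hx
    rw [hdiv x hx.ne']
    have := jincS_C_le_one (t := x^2/4) (by positivity)
    linarith
  · have hcont : ContinuousAt (fun x : ℝ => jincS jincC (x^2/4) / 2) 0 := by
      apply ContinuousAt.div_const
      have h1 : ContinuousAt (jincS jincC) ((0:ℝ)^2/4) :=
        (jinc_hasDerivAt jincC_bound ((0:ℝ)^2/4)).differentiableAt.continuousAt
      have h2 : ContinuousAt (fun x : ℝ => x^2/4) 0 :=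
        ((continuous_pow 2).div_const (4:ℝ)).continuousAt
      show ContinuousAt ((jincS jincC) ∘ (fun x : ℝ => x^2/4)) 0
      exact ContinuousAt.comp h1 h2
    have htend : Tendsto (fun x : ℝ => jincS jincC (x^2/4) / 2)
        (nhdsWithin 0 (Set.Ioi 0)) (nhds (1/2)) := by
      have := hcont.tendsto
      rw [show jincS jincC ((0:ℝ)^2/4) / 2 = 1/2 by norm_num [jincS_C_zero]] at this
      exact this.mono_left nhdsWithin_le_nhds
    refine htend.congr' ?_
    filter_upwards [self_mem_nhdsWithin] with x hx
    exact (hdiv x (ne_of_gt hx)).symm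
end

section
/- Let P₀ ≥ 1, r₀ ≤ r₁, N, V > 0, and let G(r; r₀, r₁, P₀) = f(r−r₁) + P₀(f(r−r₀) − f(r−r₁)) with f the Heaviside step. Then the function P(k) = 1 + (N/V)(2π)^{d/2} k^{1−d/2} ∫₀^∞ r^{d/2} J_{d/2−1}(kr)(G(r) − 1) dr equals 1 − (N/V) P₀ (2π r₀/k)^{d/2} J_{d/2}(k r₀) − (N/V)(1 − P₀)(2π r₁/k)^{d/2} J_{d/2}(k r₁) for every k > 0. -/
open Real MeasureTheory Set

/-- Heaviside step function: `0` for `x ≤ 0`, `1` for `x > 0`. -/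
noncomputable def heaviside (x : ℝ) : ℝ := if x ≤ 0 then 0 else 1

private lemma fact_gamma_le (ν : ℝ) (hν : 0 < ν) (m : ℕ) :
    (m.factorial : ℝ) * Real.Gamma (ν + 1) ≤ Real.Gamma (m + ν + 1) := by
  induction m with
  | zero => simp
  | succ n ih =>
      have h1 : ((n : ℝ) + ν + 1) ≠ 0 := by positivity
      have h2 : Real.Gamma ((n : ℝ) + 1 + ν + 1) = ((n : ℝ) + ν + 1) * Real.Gamma ((n : ℝ) + ν + 1) := by
        rw [show (n : ℝ) + 1 + ν + 1 = ((n : ℝ) + ν + 1) + 1 by ring, Real.Gamma_add_one h1]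
      have h3 : ((Nat.factorial (n + 1) : ℝ)) = ((n : ℝ) + 1) * (Nat.factorial n : ℝ) := by
        rw [Nat.factorial_succ]; push_cast; ring
      have h4 : 0 < Real.Gamma ((n : ℝ) + ν + 1) := Real.Gamma_pos_of_pos (by positivity)
      push_cast
      rw [h2, h3]
      nlinarith [ih, h4, hν]

private lemma summable_aux (ν x : ℝ) (hν : 0 < ν) (hx : 0 ≤ x) :
    Summable (fun m : ℕ => x ^ m / (m.factorial * Real.Gamma (m + ν + 1))) := by
  have hΓ : ∀ m : ℕ, 0 < Real.Gamma ((m : ℝ) + ν + 1) := fun m =>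
    Real.Gamma_pos_of_pos (by positivity)
  have hΓν : 0 < Real.Gamma (ν + 1) := Real.Gamma_pos_of_pos (by positivity)
  refine Summable.of_nonneg_of_le (fun m => by positivity) (fun m => ?_)
    ((Real.summable_pow_div_factorial x).mul_left (1 / Real.Gamma (ν + 1)))
  have hfac : (1 : ℝ) ≤ m.factorial := by exact_mod_cast m.factorial_pos
  have hΓle : Real.Gamma (ν + 1) ≤ Real.Gamma ((m : ℝ) + ν + 1) := by
    nlinarith [fact_gamma_le ν hν m, hΓν, hfac]
  calc x ^ m / (m.factorial * Real.Gamma ((m : ℝ) + ν + 1))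
      ≤ x ^ m / (m.factorial * Real.Gamma (ν + 1)) := by
        have h5 : (0:ℝ) < (m.factorial : ℝ) * Real.Gamma (ν + 1) := by positivity
        have h6 : (m.factorial : ℝ) * Real.Gamma (ν + 1) ≤ m.factorial * Real.Gamma ((m : ℝ) + ν + 1) :=
          mul_le_mul_of_nonneg_left hΓle (by positivity)
        exact div_le_div_of_nonneg_left (by positivity) h5 h6 |>.trans_eq rfl
    _ = 1 / Real.Gamma (ν + 1) * (x ^ m / m.factorial) := by ring

private lemma step_integral {r₀ r₁ : ℝ} (hr₀ : 0 ≤ r₀) (hr : r₀ ≤ r₁)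
    (p α β : ℝ) (hp : -1 < p) (w : ℝ → ℝ)
    (h1 : ∀ r ∈ Ioc (0 : ℝ) r₀, w r = α * r ^ p)
    (h2 : ∀ r ∈ Ioc r₀ r₁, w r = β * r ^ p)
    (h3 : ∀ r ∈ Ioi r₁, w r = 0) :
    IntegrableOn w (Ioi (0 : ℝ)) ∧
      ∫ r in Ioi (0 : ℝ), w r
        = α * (r₀ ^ (p + 1) / (p + 1)) + β * ((r₁ ^ (p + 1) - r₀ ^ (p + 1)) / (p + 1)) := by
  have hr₁ : 0 ≤ r₁ := hr₀.trans hr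
  have hq : 0 < p + 1 := by linarith
  have hint0 : ∀ a b : ℝ, a ≤ b → IntegrableOn (fun r : ℝ => r ^ p) (Ioc a b) := by
    intro a b hab
    rw [← intervalIntegrable_iff_integrableOn_Ioc_of_le hab]
    exact intervalIntegral.intervalIntegrable_rpow' hp
  have hI1 : IntegrableOn w (Ioc 0 r₀) :=
    IntegrableOn.congr_fun ((hint0 0 r₀ hr₀).const_mul α)
      (fun r hrr => (h1 r hrr).symm) measurableSet_Ioc
  have hI2 : IntegrableOn w (Ioc r₀ r₁) :=
    IntegrableOn.congr_fun ((hint0 r₀ r₁ hr).const_mul β)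
      (fun r hrr => (h2 r hrr).symm) measurableSet_Ioc
  have hI12 : IntegrableOn w (Ioc 0 r₁) := by
    rw [← Set.Ioc_union_Ioc_eq_Ioc hr₀ hr]
    exact hI1.union hI2
  have heq : EqOn ((Ioc (0 : ℝ) r₁).indicator w) w (Ioi 0) := by
    intro r hrr
    by_cases h : r ≤ r₁
    · exact indicator_of_mem (Set.mem_Ioc.mpr ⟨hrr, h⟩) w
    · rw [indicator_of_notMem (fun hm => h hm.2), h3 r (not_le.mp h)]
  have hIoi : IntegrableOn w (Ioi 0) :=
    IntegrableOn.congr_fun ((hI12.integrable_indicator measurableSet_Ioc).integrableOn) heq measurableSet_Ioi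
  refine ⟨hIoi, ?_⟩
  have key : ∀ (c a b : ℝ), a ≤ b → ∀ hc : (∀ r ∈ Ioc a b, w r = c * r ^ p),
      ∫ r in Ioc a b, w r = c * ((b ^ (p + 1) - a ^ (p + 1)) / (p + 1)) := by
    intro c a b hab hc
    rw [setIntegral_congr_fun measurableSet_Ioc hc, ← intervalIntegral.integral_of_le hab,
      intervalIntegral.integral_const_mul, integral_rpow (Or.inl hp)]
  calc ∫ r in Ioi (0 : ℝ), w r
      = ∫ r in Ioi (0 : ℝ), (Ioc (0 : ℝ) r₁).indicator w r :=
        (setIntegral_congr_fun measurableSet_Ioi heq).symm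
    _ = ∫ r in Ioi (0 : ℝ) ∩ Ioc (0 : ℝ) r₁, w r := setIntegral_indicator measurableSet_Ioc
    _ = ∫ r in Ioc (0 : ℝ) r₁, w r := by
        rw [Set.inter_eq_right.mpr Ioc_subset_Ioi_self]
    _ = (∫ r in Ioc (0 : ℝ) r₀, w r) + ∫ r in Ioc r₀ r₁, w r := by
        rw [← Set.Ioc_union_Ioc_eq_Ioc hr₀ hr,
          setIntegral_union (Set.Ioc_disjoint_Ioc_of_le le_rfl) measurableSet_Ioc hI1 hI2]
    _ = α * (r₀ ^ (p + 1) / (p + 1)) + β * ((r₁ ^ (p + 1) - r₀ ^ (p + 1)) / (p + 1)) := by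
        rw [key α 0 r₀ hr₀ h1, key β r₀ r₁ hr h2,
          Real.zero_rpow (by linarith : p + 1 ≠ 0)]
        ring

private noncomputable def Cc (ν k : ℝ) (m : ℕ) : ℝ :=
  ((-1 : ℝ) ^ m / (m.factorial * Real.Gamma (m + ν))) * (k / 2) ^ (2 * (m : ℝ) + ν - 1)

private lemma gamma_mpos (ν : ℝ) (hν : 0 < ν) (m : ℕ) : 0 < Real.Gamma ((m : ℝ) + ν) :=
  Real.Gamma_pos_of_pos (by positivity)

private lemma absCc (ν k : ℝ) (hν : 0 < ν) (hk : 0 < k) (m : ℕ) :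
    |Cc ν k m| = (k / 2) ^ (2 * (m : ℝ) + ν - 1) / (m.factorial * Real.Gamma (m + ν)) := by
  have h1 : (0 : ℝ) < m.factorial * Real.Gamma (m + ν) := by
    have := gamma_mpos ν hν m
    have h2 : (0 : ℝ) < m.factorial := by exact_mod_cast m.factorial_pos
    positivity
  rw [Cc, abs_mul, abs_div, abs_pow, abs_neg, abs_one, one_pow,
    abs_of_nonneg (Real.rpow_nonneg (by positivity) _), abs_of_pos h1]
  ring

private lemma summable_absCc (ν k a : ℝ) (hν : 0 < ν) (hk : 0 < k) (ha : 0 ≤ a) :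
    Summable (fun m : ℕ =>
      |Cc ν k m| * (a ^ (2 * (m : ℝ) + 2 * ν) / (2 * (m : ℝ) + 2 * ν))) := by
  rcases eq_or_lt_of_le ha with h0 | ha'
  · refine (summable_zero).congr fun m => ?_
    rw [← h0, Real.zero_rpow (by positivity : 2 * (m : ℝ) + 2 * ν ≠ 0)]
    simp
  · refine (((summable_aux ν ((k / 2 * a) ^ 2) hν (sq_nonneg _)).mul_left
      ((k / 2) ^ (ν - 1) * a ^ (2 * ν) / 2)).congr fun m => ?_)
    have hΓm := gamma_mpos ν hν m
    have hfac : (0 : ℝ) < m.factorial := by exact_mod_cast m.factorial_pos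
    have h2m : (k / 2) ^ (2 * (m : ℝ) + ν - 1) = ((k / 2) ^ 2) ^ m * (k / 2) ^ (ν - 1) := by
      rw [show 2 * (m : ℝ) + ν - 1 = ((2 * m : ℕ) : ℝ) + (ν - 1) by push_cast; ring,
        Real.rpow_add (by positivity), Real.rpow_natCast, pow_mul]
    have h2a : a ^ (2 * (m : ℝ) + 2 * ν) = (a ^ 2) ^ m * a ^ (2 * ν) := by
      rw [show 2 * (m : ℝ) + 2 * ν = ((2 * m : ℕ) : ℝ) + 2 * ν by push_cast; ring,
        Real.rpow_add ha', Real.rpow_natCast, pow_mul]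
    have hg : Real.Gamma ((m : ℝ) + ν + 1) = ((m : ℝ) + ν) * Real.Gamma ((m : ℝ) + ν) :=
      Real.Gamma_add_one (by positivity)
    rw [absCc ν k hν hk m, h2m, h2a, hg, mul_pow]
    have hmν : (0 : ℝ) < (m : ℝ) + ν := by positivity
    field_simp
    ring

private lemma tsum_Cc (ν k a : ℝ) (hν : 0 < ν) (hk : 0 < k) (ha : 0 ≤ a) :
    ∑' m : ℕ, Cc ν k m * (a ^ (2 * (m : ℝ) + 2 * ν) / (2 * (m : ℝ) + 2 * ν))
      = a ^ ν * besselJ ν (k * a) / k := by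
  rcases eq_or_lt_of_le ha with h0 | ha'
  · rw [← h0]
    rw [Real.zero_rpow hν.ne']
    simp only [zero_mul, zero_div]
    have hz : ∀ m : ℕ, Cc ν k m * ((0:ℝ) ^ (2 * (m : ℝ) + 2 * ν) / (2 * (m : ℝ) + 2 * ν)) = 0 := by
      intro m
      rw [Real.zero_rpow (by positivity : 2 * (m : ℝ) + 2 * ν ≠ 0)]
      simp
    rw [tsum_congr hz, tsum_zero]
  · rw [besselJ, ← tsum_mul_left, ← tsum_div_const]
    refine tsum_congr fun m => ?_
    have hΓm := gamma_mpos ν hν m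
    have hfac : (0 : ℝ) < m.factorial := by exact_mod_cast m.factorial_pos
    have hmν : (0 : ℝ) < (m : ℝ) + ν := by positivity
    have hg : Real.Gamma ((m : ℝ) + ν + 1) = ((m : ℝ) + ν) * Real.Gamma ((m : ℝ) + ν) :=
      Real.Gamma_add_one (by positivity)
    have e1 : (k * a / 2) ^ (2 * (m : ℝ) + ν)
        = (k / 2) ^ (2 * (m : ℝ) + ν - 1) * (k / 2) * a ^ (2 * (m : ℝ) + ν) := by
      rw [show k * a / 2 = (k / 2) * a by ring, Real.mul_rpow (by positivity) ha'.le,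
        show 2 * (m : ℝ) + ν = (2 * (m : ℝ) + ν - 1) + 1 by ring,
        Real.rpow_add (by positivity), Real.rpow_one]
      ring_nf
    have e2 : a ^ ν * a ^ (2 * (m : ℝ) + ν) = a ^ (2 * (m : ℝ) + 2 * ν) := by
      rw [← Real.rpow_add ha']; ring_nf
    rw [Cc, hg, e1, ← e2]
    field_simp

/-- Closed-form power spectral density of the Stair-PCF space-filling design. -/
theorem stair_pcf_psd (d : ℕ) (hd : 1 ≤ d) (r₀ r₁ P₀ N V : ℝ)
    (hr₀ : 0 ≤ r₀) (hr : r₀ ≤ r₁) (hP : 1 ≤ P₀) (hN : 0 < N) (hV : 0 < V) :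
    ∀ k > (0 : ℝ),
      1 + (N / V) * (2 * π) ^ ((d : ℝ) / 2) * k ^ (1 - (d : ℝ) / 2) *
        (∫ r in Ioi (0 : ℝ), r ^ ((d : ℝ) / 2) * besselJ ((d : ℝ) / 2 - 1) (k * r) *
          ((heaviside (r - r₁) + P₀ * (heaviside (r - r₀) - heaviside (r - r₁))) - 1)) =
      1 - (N / V) * P₀ * (2 * π * r₀ / k) ^ ((d : ℝ) / 2) * besselJ ((d : ℝ) / 2) (k * r₀)
        - (N / V) * (1 - P₀) * (2 * π * r₁ / k) ^ ((d : ℝ) / 2) * besselJ ((d : ℝ) / 2) (k * r₁) := by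
  intro k hk
  set ν : ℝ := (d : ℝ) / 2 with hνdef
  have hd1 : (1 : ℝ) ≤ (d : ℝ) := by exact_mod_cast hd
  have hν : 0 < ν := by rw [hνdef]; linarith
  have hr₁ : 0 ≤ r₁ := hr₀.trans hr
  -- step function values
  have hs1 : ∀ r ∈ Ioc (0 : ℝ) r₀,
      (heaviside (r - r₁) + P₀ * (heaviside (r - r₀) - heaviside (r - r₁))) - 1 = -1 := by
    intro r hrr
    have h1 : r ≤ r₁ := by linarith [hrr.2]
    have h2 : r ≤ r₀ := hrr.2
    simp [heaviside, h1, h2]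
  have hs2 : ∀ r ∈ Ioc r₀ r₁,
      (heaviside (r - r₁) + P₀ * (heaviside (r - r₀) - heaviside (r - r₁))) - 1 = P₀ - 1 := by
    intro r hrr
    have h1 : r ≤ r₁ := hrr.2
    have h2 : ¬ r ≤ r₀ := not_le.mpr hrr.1
    simp [heaviside, h1, h2]
  have hs3 : ∀ r ∈ Ioi r₁,
      (heaviside (r - r₁) + P₀ * (heaviside (r - r₀) - heaviside (r - r₁))) - 1 = 0 := by
    intro r hrr
    have h0 : r₁ < r := hrr
    have h1 : ¬ r ≤ r₁ := not_le.mpr h0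
    have h2 : ¬ r ≤ r₀ := not_le.mpr (lt_of_le_of_lt hr h0)
    simp [heaviside, h1, h2]
  set f : ℕ → ℝ → ℝ := fun m r => Cc ν k m * r ^ (2 * (m : ℝ) + 2 * ν - 1) *
      ((heaviside (r - r₁) + P₀ * (heaviside (r - r₀) - heaviside (r - r₁))) - 1) with hfdef
  have hq : ∀ m : ℕ, 2 * (m : ℝ) + 2 * ν - 1 + 1 = 2 * (m : ℝ) + 2 * ν := by intro m; ring
  have hp : ∀ m : ℕ, (-1 : ℝ) < 2 * (m : ℝ) + 2 * ν - 1 := by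
    intro m
    have : (0 : ℝ) ≤ (m : ℝ) := Nat.cast_nonneg m
    linarith
  -- integrals of the individual terms
  have hstep : ∀ m : ℕ, IntegrableOn (f m) (Ioi (0 : ℝ)) ∧
      ∫ r in Ioi (0 : ℝ), f m r
        = -(Cc ν k m) * (r₀ ^ (2 * (m : ℝ) + 2 * ν - 1 + 1) / (2 * (m : ℝ) + 2 * ν - 1 + 1))
          + Cc ν k m * (P₀ - 1) *
            ((r₁ ^ (2 * (m : ℝ) + 2 * ν - 1 + 1) - r₀ ^ (2 * (m : ℝ) + 2 * ν - 1 + 1)) /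
              (2 * (m : ℝ) + 2 * ν - 1 + 1)) := by
    intro m
    refine step_integral hr₀ hr _ (-(Cc ν k m)) (Cc ν k m * (P₀ - 1)) (hp m) (f m) ?_ ?_ ?_
    · intro r hrr; simp only [hfdef]; rw [hs1 r hrr]; ring
    · intro r hrr; simp only [hfdef]; rw [hs2 r hrr]; ring
    · intro r hrr; simp only [hfdef]; rw [hs3 r hrr]; ring
  -- integrals of the norms
  have hnorm : ∀ m : ℕ,
      ∫ r in Ioi (0 : ℝ), ‖f m r‖
        = |Cc ν k m| * (r₀ ^ (2 * (m : ℝ) + 2 * ν - 1 + 1) / (2 * (m : ℝ) + 2 * ν - 1 + 1))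
          + |Cc ν k m| * (P₀ - 1) *
            ((r₁ ^ (2 * (m : ℝ) + 2 * ν - 1 + 1) - r₀ ^ (2 * (m : ℝ) + 2 * ν - 1 + 1)) /
              (2 * (m : ℝ) + 2 * ν - 1 + 1)) := by
    intro m
    refine (step_integral hr₀ hr _ (|Cc ν k m|) (|Cc ν k m| * (P₀ - 1)) (hp m)
      (fun r => ‖f m r‖) ?_ ?_ ?_).2
    · intro r hrr
      simp only [hfdef]
      rw [hs1 r hrr, Real.norm_eq_abs, abs_mul, abs_mul, abs_neg, abs_one, mul_one,
        abs_of_nonneg (Real.rpow_nonneg hrr.1.le _)]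
    · intro r hrr
      have hrp : (0 : ℝ) < r := hr₀.trans_lt hrr.1
      simp only [hfdef]
      rw [hs2 r hrr, Real.norm_eq_abs, abs_mul, abs_mul,
        abs_of_nonneg (Real.rpow_nonneg hrp.le _), abs_of_nonneg (by linarith : (0:ℝ) ≤ P₀ - 1)]
      ring
    · intro r hrr; simp only [hfdef]; rw [hs3 r hrr]; simp
  -- summability
  have hsum_abs : ∀ a : ℝ, 0 ≤ a → Summable (fun m : ℕ =>
      |Cc ν k m| * (a ^ (2 * (m : ℝ) + 2 * ν) / (2 * (m : ℝ) + 2 * ν))) :=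
    fun a ha => summable_absCc ν k a hν hk ha
  have hsum_C : ∀ a : ℝ, 0 ≤ a → Summable (fun m : ℕ =>
      Cc ν k m * (a ^ (2 * (m : ℝ) + 2 * ν) / (2 * (m : ℝ) + 2 * ν))) := by
    intro a ha
    refine summable_abs_iff.mp (((hsum_abs a ha)).congr fun m => ?_)
    have hqpos : (0 : ℝ) < 2 * (m : ℝ) + 2 * ν := by positivity
    rw [abs_mul, abs_of_nonneg (div_nonneg (Real.rpow_nonneg ha _) hqpos.le)]
  have hnorm_sum : Summable (fun m : ℕ => ∫ r in Ioi (0 : ℝ), ‖f m r‖) := by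
    refine Summable.of_nonneg_of_le (fun m => integral_nonneg fun r => norm_nonneg _)
      (fun m => ?_) ((hsum_abs r₁ hr₁).mul_left P₀)
    rw [hnorm m, hq m]
    have hqpos : (0 : ℝ) < 2 * (m : ℝ) + 2 * ν := by positivity
    have hXY : r₀ ^ (2 * (m : ℝ) + 2 * ν) ≤ r₁ ^ (2 * (m : ℝ) + 2 * ν) :=
      Real.rpow_le_rpow hr₀ hr hqpos.le
    have hX0 : (0 : ℝ) ≤ r₀ ^ (2 * (m : ℝ) + 2 * ν) := Real.rpow_nonneg hr₀ _
    have habs : (0 : ℝ) ≤ |Cc ν k m| := abs_nonneg _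
    calc |Cc ν k m| * (r₀ ^ (2 * (m : ℝ) + 2 * ν) / (2 * (m : ℝ) + 2 * ν))
          + |Cc ν k m| * (P₀ - 1) *
            ((r₁ ^ (2 * (m : ℝ) + 2 * ν) - r₀ ^ (2 * (m : ℝ) + 2 * ν)) / (2 * (m : ℝ) + 2 * ν))
        = (|Cc ν k m| * r₀ ^ (2 * (m : ℝ) + 2 * ν)
            + |Cc ν k m| * (P₀ - 1) * (r₁ ^ (2 * (m : ℝ) + 2 * ν) - r₀ ^ (2 * (m : ℝ) + 2 * ν)))
            / (2 * (m : ℝ) + 2 * ν) := by ring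
      _ ≤ (P₀ * (|Cc ν k m| * r₁ ^ (2 * (m : ℝ) + 2 * ν))) / (2 * (m : ℝ) + 2 * ν) := by
          refine (div_le_div_iff_of_pos_right hqpos).mpr ?_
          nlinarith [mul_nonneg habs (sub_nonneg.mpr hXY),
            mul_nonneg (mul_nonneg habs hX0) (by linarith : (0:ℝ) ≤ P₀ - 1)]
      _ = P₀ * (|Cc ν k m| * (r₁ ^ (2 * (m : ℝ) + 2 * ν) / (2 * (m : ℝ) + 2 * ν))) := by ring
  -- pointwise expansion of the integrand into the series
  have hpt : EqOn (fun r : ℝ => r ^ ν * besselJ (ν - 1) (k * r) *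
      ((heaviside (r - r₁) + P₀ * (heaviside (r - r₀) - heaviside (r - r₁))) - 1))
      (fun r : ℝ => ∑' m : ℕ, f m r) (Ioi (0 : ℝ)) := by
    intro r hrr
    have hrp : (0 : ℝ) < r := hrr
    dsimp only
    calc r ^ ν * besselJ (ν - 1) (k * r) *
          ((heaviside (r - r₁) + P₀ * (heaviside (r - r₀) - heaviside (r - r₁))) - 1)
        = (∑' m : ℕ, ((-1 : ℝ) ^ m / (m.factorial * Real.Gamma (m + (ν - 1) + 1))) *
            (k * r / 2) ^ ((2 * m : ℝ) + (ν - 1))) *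
            (r ^ ν *
              ((heaviside (r - r₁) + P₀ * (heaviside (r - r₀) - heaviside (r - r₁))) - 1)) := by
          rw [besselJ]; ring
      _ = ∑' m : ℕ, (((-1 : ℝ) ^ m / (m.factorial * Real.Gamma (m + (ν - 1) + 1))) *
            (k * r / 2) ^ ((2 * m : ℝ) + (ν - 1))) *
            (r ^ ν *
              ((heaviside (r - r₁) + P₀ * (heaviside (r - r₀) - heaviside (r - r₁))) - 1)) :=
          tsum_mul_right.symm
      _ = ∑' m : ℕ, f m r := by
          refine tsum_congr fun m => ?_
          simp only [hfdef]
          rw [show (m : ℝ) + (ν - 1) + 1 = (m : ℝ) + ν by ring]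
          have e2 : (k * r / 2) ^ (2 * (m : ℝ) + (ν - 1))
              = (k / 2) ^ (2 * (m : ℝ) + ν - 1) * r ^ (2 * (m : ℝ) + ν - 1) := by
            rw [show k * r / 2 = (k / 2) * r by ring,
              Real.mul_rpow (by positivity) hrp.le,
              show 2 * (m : ℝ) + (ν - 1) = 2 * (m : ℝ) + ν - 1 by ring]
          have e3 : r ^ (2 * (m : ℝ) + ν - 1) * r ^ ν = r ^ (2 * (m : ℝ) + 2 * ν - 1) := by
            rw [← Real.rpow_add hrp, show 2 * (m : ℝ) + ν - 1 + ν = 2 * (m : ℝ) + 2 * ν - 1 by ring]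
          rw [e2, Cc, ← e3]
          ring
  -- compute the integral
  have hI : ∫ r in Ioi (0 : ℝ), r ^ ν * besselJ (ν - 1) (k * r) *
      ((heaviside (r - r₁) + P₀ * (heaviside (r - r₀) - heaviside (r - r₁))) - 1)
      = -P₀ * (r₀ ^ ν * besselJ ν (k * r₀) / k) + (P₀ - 1) * (r₁ ^ ν * besselJ ν (k * r₁) / k) := by
    rw [setIntegral_congr_fun measurableSet_Ioi hpt]
    rw [← MeasureTheory.integral_tsum_of_summable_integral_norm (fun m => (hstep m).1) hnorm_sum]
    calc ∑' m : ℕ, ∫ r in Ioi (0 : ℝ), f m r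
        = ∑' m : ℕ, (-P₀ * (Cc ν k m * (r₀ ^ (2 * (m : ℝ) + 2 * ν) / (2 * (m : ℝ) + 2 * ν)))
            + (P₀ - 1) * (Cc ν k m * (r₁ ^ (2 * (m : ℝ) + 2 * ν) / (2 * (m : ℝ) + 2 * ν)))) := by
          refine tsum_congr fun m => ?_
          rw [(hstep m).2, hq m]
          ring
      _ = (∑' m : ℕ, -P₀ * (Cc ν k m * (r₀ ^ (2 * (m : ℝ) + 2 * ν) / (2 * (m : ℝ) + 2 * ν))))
            + ∑' m : ℕ, (P₀ - 1) *
              (Cc ν k m * (r₁ ^ (2 * (m : ℝ) + 2 * ν) / (2 * (m : ℝ) + 2 * ν))) :=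
          Summable.tsum_add ((hsum_C r₀ hr₀).mul_left (-P₀)) ((hsum_C r₁ hr₁).mul_left (P₀ - 1))
      _ = -P₀ * (r₀ ^ ν * besselJ ν (k * r₀) / k)
            + (P₀ - 1) * (r₁ ^ ν * besselJ ν (k * r₁) / k) := by
          rw [tsum_mul_left, tsum_mul_left, tsum_Cc ν k r₀ hν hk hr₀, tsum_Cc ν k r₁ hν hk hr₁]
  rw [hI]
  have hsplit : ∀ r : ℝ, 0 ≤ r → (2 * π * r / k) ^ ν = (2 * π) ^ ν * r ^ ν / k ^ ν := by
    intro r hrr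
    rw [Real.div_rpow (by positivity) hk.le, Real.mul_rpow (by positivity) hrr]
  have hk1 : k ^ (1 - ν) = k / k ^ ν := by rw [Real.rpow_sub hk, Real.rpow_one]
  rw [hsplit r₀ hr₀, hsplit r₁ hr₁, hk1]
  have hkν : k ^ ν ≠ 0 := (Real.rpow_pos_of_pos hk ν).ne'
  field_simp
  ring
end
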